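/- Assume [E : F] = 2. Then L is thin if and only if d_i = 0 for every i ≥ 2, where d_i = dim_F(C_i ∩ L_1); and in this case dim_F L_i = 2 for every i ≠ 2 (and dim_F L_2 = 1). -/

import Mathlib

open Submodule

set_option maxHeartbeats 1000000

/-- The `i`-th two-step centraliser `C_i = {a ∈ M_1 | ⁅a, u⁆ = 0 for all u ∈ M_i}`. -/
def twoStepCentraliser {E : Type*} [Field E] {M : Type*} [LieRing M] [LieAlgebra E M]
    (Mc : ℕ → Submodule E M) (i : ℕ) : Submodule E M where
  carrier := {a : M | a ∈ Mc 1 ∧ ∀ u ∈ Mc i, ⁅a, u⁆ = 0}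
  add_mem' := by
    rintro a b ⟨ha1, ha2⟩ ⟨hb1, hb2⟩
    exact ⟨add_mem ha1 hb1, fun u hu => by rw [add_lie, ha2 u hu, hb2 u hu, add_zero]⟩
  zero_mem' := ⟨zero_mem _, fun u _ => zero_lie u⟩
  smul_mem' := by
    rintro c a ⟨ha1, ha2⟩
    exact ⟨Submodule.smul_mem _ c ha1, fun u hu => by rw [smul_lie, ha2 u hu, smul_zero]⟩

/-- `Mc` is a grading of `M` as a graded Lie algebra of maximal class over `E`,
generated in degree 1. -/
structure IsMaximalClass (E : Type*) [Field E] (M : Type*) [LieRing M] [LieAlgebra E M]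
    (Mc : ℕ → Submodule E M) : Prop where
  zero_bot : Mc 0 = ⊥
  internal : DirectSum.IsInternal Mc
  lie_mem : ∀ i j : ℕ, ∀ x ∈ Mc i, ∀ y ∈ Mc j, ⁅x, y⁆ ∈ Mc (i + j)
  finrank_one : Module.finrank E ↥(Mc 1) = 2
  finrank_eq_one : ∀ i : ℕ, 2 ≤ i → Module.finrank E ↥(Mc i) = 1
  span_succ : ∀ i : ℕ, 1 ≤ i →
    Mc (i + 1) = Submodule.span E {z : M | ∃ v ∈ Mc i, ∃ a ∈ Mc 1, z = ⁅v, a⁆}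

/-- The homogeneous components of the Lie `F`-subalgebra generated by `X` and `Y` in
degree 1:  `L_1 = span_F {X, Y}` and `L_{i+1} = span_F {⁅v, a⁆ : v ∈ L_i, a ∈ L_1}`. -/
def Lcomp (F : Type*) [Field F] {M : Type*} [LieRing M] [Module F M]
    (X Y : M) : ℕ → Submodule F M
  | 0 => ⊥
  | 1 => Submodule.span F {X, Y}
  | (i + 2) => Submodule.span F
      {z : M | ∃ v ∈ Lcomp F X Y (i + 1), ∃ a ∈ Submodule.span F ({X, Y} : Set M), z = ⁅v, a⁆}

/-- `d_i = dim_F (C_i ∩ L_1)`. -/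
noncomputable def dSeq (E : Type*) [Field E] {M : Type*} [LieRing M] [LieAlgebra E M]
    (Mc : ℕ → Submodule E M) (F : Type*) [Field F] [Algebra F E] [LieAlgebra F M]
    [IsScalarTower F E M] (X Y : M) (i : ℕ) : ℕ :=
  Module.finrank F
    ↥(Submodule.restrictScalars F (twoStepCentraliser Mc i) ⊓ Lcomp F X Y 1)

/-- The covering property: `⁅u, L_1⁆ = L_{i+1}` for every `i ≥ 1` and nonzero `u ∈ L_i`. -/
def CoveringProperty (F : Type*) [Field F] {M : Type*} [LieRing M] [Module F M]
    (X Y : M) : Prop :=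
  ∀ i : ℕ, 1 ≤ i → ∀ u ∈ Lcomp F X Y i, u ≠ 0 →
    Submodule.span F {z : M | ∃ a ∈ Lcomp F X Y 1, z = ⁅u, a⁆} = Lcomp F X Y (i + 1)

section Aux

open Module

/-- Bracket of two `R`-linear combinations of a pair. -/
private lemma pair_bracket {R : Type*} [CommRing R] {M : Type*} [LieRing M] [LieAlgebra R M]
    (X Y : M) (s t p q : R) :
    ⁅s • X + t • Y, p • X + q • Y⁆ = (s * q - t * p) • ⁅X, Y⁆ := by
  have hskew : ⁅Y, X⁆ = -⁅X, Y⁆ := by rw [← lie_skew]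
  simp only [add_lie, lie_add, smul_lie, lie_smul, lie_self, smul_zero, add_zero, zero_add,
    hskew, smul_neg, smul_smul]
  module

/-- Rank–nullity for the image of a submodule under an endomorphism. -/
private lemma finrank_map_add_inf_ker {K V : Type*} [Field K] [AddCommGroup V] [Module K V]
    (f : V →ₗ[K] V) (p : Submodule K V) [FiniteDimensional K p] :
    finrank K ↥(Submodule.map f p) + finrank K ↥(LinearMap.ker f ⊓ p) = finrank K ↥p := by
  have h1 := LinearMap.finrank_range_add_finrank_ker (f.domRestrict p)
  rw [LinearMap.range_domRestrict] at h1
  have h3 : (LinearMap.ker f).comap p.subtype = (LinearMap.ker f ⊓ p).comap p.subtype := by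
    ext x
    simp [Submodule.mem_comap, LinearMap.mem_ker, Submodule.mem_inf, x.2]
  rw [LinearMap.ker_domRestrict, h3,
    (Submodule.comapSubtypeEquivOfLe
      (inf_le_right : LinearMap.ker f ⊓ p ≤ p)).finrank_eq] at h1
  exact h1

/-- All hypotheses of the main theorem, bundled. -/
structure Stmt8Setup (E : Type*) [Field E] (M : Type*) [LieRing M] [LieAlgebra E M]
    (Mc : ℕ → Submodule E M)
    (F : Type*) [Field F] [Algebra F E] [LieAlgebra F M] [IsScalarTower F E M]
    (X Y : M) : Prop where
  hM : IsMaximalClass E M Mc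
  hEF : Module.finrank F E = 2
  hX : X ∈ Mc 1
  hY : Y ∈ Mc 1
  hXY : LinearIndependent E ![X, Y]

namespace Stmt8Setup

variable {E : Type*} [Field E] {M : Type*} [LieRing M] [LieAlgebra E M]
  {Mc : ℕ → Submodule E M}
  {F : Type*} [Field F] [Algebra F E] [LieAlgebra F M] [IsScalarTower F E M]
  {X Y : M}

/-! ### Basic facts over `E` -/

theorem fdMc (h : Stmt8Setup E M Mc F X Y) (i : ℕ) (hi : 1 ≤ i) :
    FiniteDimensional E ↥(Mc i) := by
  rcases eq_or_lt_of_le hi with h1 | h2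
  · exact .of_finrank_pos (by rw [← h1, h.hM.finrank_one]; norm_num)
  · exact .of_finrank_pos (by rw [h.hM.finrank_eq_one i h2]; norm_num)

theorem mc_ne_bot (h : Stmt8Setup E M Mc F X Y) (i : ℕ) (hi : 2 ≤ i) : Mc i ≠ ⊥ := by
  intro hb
  have h1 := h.hM.finrank_eq_one i hi
  rw [hb, finrank_bot] at h1
  exact absurd h1 (by norm_num)

theorem exists_ne_zero (h : Stmt8Setup E M Mc F X Y) (i : ℕ) (hi : 2 ≤ i) :
    ∃ u ∈ Mc i, u ≠ 0 :=
  (Submodule.ne_bot_iff _).1 (h.mc_ne_bot i hi)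

theorem eq_span_of_ne_zero (h : Stmt8Setup E M Mc F X Y) (i : ℕ) (hi : 2 ≤ i)
    {u : M} (hu : u ∈ Mc i) (hu0 : u ≠ 0) : Mc i = span E {u} := by
  haveI := h.fdMc i (by omega)
  refine (Submodule.eq_of_le_of_finrank_le ?_ ?_).symm
  · rwa [span_singleton_le_iff_mem]
  · rw [finrank_span_singleton hu0, h.hM.finrank_eq_one i hi]

theorem mc1_eq_span (h : Stmt8Setup E M Mc F X Y) : Mc 1 = span E {X, Y} := by
  haveI := h.fdMc 1 le_rfl
  refine (Submodule.eq_of_le_of_finrank_le ?_ ?_).symm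
  · rw [span_le]
    rintro z hz
    rcases hz with rfl | hz
    · exact h.hX
    · rcases hz with rfl
      exact h.hY
  · have hr : Set.range ![X, Y] = {X, Y} := by
      ext z
      simp only [Set.mem_insert_iff, Set.mem_singleton_iff, Set.mem_range,
        Fin.exists_fin_two]
      tauto
    have hs := finrank_span_eq_card h.hXY
    rw [hr] at hs
    rw [h.hM.finrank_one, hs]
    simp

theorem exists_lie_ne_zero (h : Stmt8Setup E M Mc F X Y) (i : ℕ) (hi : 2 ≤ i)
    {u : M} (hu : u ∈ Mc i) (hu0 : u ≠ 0) : ∃ x ∈ Mc 1, ⁅u, x⁆ ≠ 0 := by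
  by_contra hc
  push_neg at hc
  apply h.mc_ne_bot (i + 1) (by omega)
  rw [h.hM.span_succ i (by omega), span_eq_bot]
  rintro z ⟨v, hv, a, ha, rfl⟩
  rw [h.eq_span_of_ne_zero i hi hu hu0, mem_span_singleton] at hv
  obtain ⟨c, rfl⟩ := hv
  rw [smul_lie, hc a ha, smul_zero]

theorem not_centraliser_top (h : Stmt8Setup E M Mc F X Y) (i : ℕ) (hi : 2 ≤ i)
    (hXC : X ∈ twoStepCentraliser Mc i) (hYC : Y ∈ twoStepCentraliser Mc i) : False := by
  obtain ⟨u, hu, hu0⟩ := h.exists_ne_zero i hi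
  obtain ⟨x, hx1, hx0⟩ := h.exists_lie_ne_zero i hi hu hu0
  have hx : x ∈ span E {X, Y} := h.mc1_eq_span ▸ hx1
  rw [mem_span_pair] at hx
  obtain ⟨s, t, rfl⟩ := hx
  apply hx0
  have h1 : ⁅u, X⁆ = 0 := by rw [← lie_skew, hXC.2 u hu, neg_zero]
  have h2 : ⁅u, Y⁆ = 0 := by rw [← lie_skew, hYC.2 u hu, neg_zero]
  rw [lie_add, lie_smul, lie_smul, h1, h2, smul_zero, smul_zero, add_zero]

theorem centraliser_mem (h : Stmt8Setup E M Mc F X Y) (i : ℕ) (hi : 2 ≤ i)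
    {u a : M} (hu : u ∈ Mc i) (hu0 : u ≠ 0) (ha : a ∈ Mc 1) (hau : ⁅a, u⁆ = 0) :
    a ∈ twoStepCentraliser Mc i := by
  refine ⟨ha, fun w hw => ?_⟩
  rw [h.eq_span_of_ne_zero i hi hu hu0, mem_span_singleton] at hw
  obtain ⟨c, rfl⟩ := hw
  rw [lie_smul, hau, smul_zero]

theorem W_ne_zero (h : Stmt8Setup E M Mc F X Y) : ⁅X, Y⁆ ≠ 0 := by
  intro h0
  apply h.mc_ne_bot 2 le_rfl
  rw [h.hM.span_succ 1 le_rfl, span_eq_bot]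
  rintro z ⟨v, hv, a, ha, rfl⟩
  rw [h.mc1_eq_span, mem_span_pair] at hv ha
  obtain ⟨s, t, rfl⟩ := hv
  obtain ⟨p, q, rfl⟩ := ha
  rw [pair_bracket, h0, smul_zero]

/-! ### The deviation lemma: deviations from a two-step centraliser element are isolated -/

theorem deviation (h : Stmt8Setup E M Mc F X Y) (c : M) (hc1 : c ∈ Mc 1)
    (hc2 : ∀ w ∈ Mc 2, ⁅c, w⁆ = 0) :
    ∀ i, 2 ≤ i → (∀ w ∈ Mc i, ⁅c, w⁆ = 0) ∨ (∀ w ∈ Mc (i + 1), ⁅c, w⁆ = 0) := by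
  intro i hi
  induction i, hi using Nat.le_induction with
  | base => exact Or.inl hc2
  | succ i hi ih =>
    by_cases hC : ∀ w ∈ Mc (i + 1), ⁅c, w⁆ = 0
    · exact Or.inl hC
    · right
      have hPi : ∀ w ∈ Mc i, ⁅c, w⁆ = 0 := ih.resolve_right hC
      obtain ⟨u, huM, hu0⟩ := h.exists_ne_zero i hi
      obtain ⟨x, hx1, hx0⟩ := h.exists_lie_ne_zero i hi huM hu0
      have hvM : ⁅u, x⁆ ∈ Mc (i + 1) := h.hM.lie_mem i 1 u huM x hx1
      have hcu : ⁅u, c⁆ = 0 := by rw [← lie_skew, hPi u huM, neg_zero]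
      have htM : ⁅x, c⁆ ∈ Mc 2 := h.hM.lie_mem 1 1 x hx1 c hc1
      have hvc : ⁅(⁅u, x⁆ : M), c⁆ = ⁅u, ⁅x, c⁆⁆ := by
        rw [lie_lie, hcu, lie_zero, sub_zero]
      have htc : ⁅(⁅x, c⁆ : M), c⁆ = 0 := by rw [← lie_skew, hc2 _ htM, neg_zero]
      have hz : ⁅(⁅(⁅u, x⁆ : M), c⁆ : M), c⁆ = 0 := by
        rw [hvc, lie_lie, htc, lie_zero, hcu, lie_zero, sub_zero]
      push_neg at hC
      obtain ⟨w', hw'M, hw'0⟩ := hC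
      have hvspan := h.eq_span_of_ne_zero (i + 1) (by omega) hvM hx0
      have hcv : ⁅c, ⁅u, x⁆⁆ ≠ 0 := by
        intro h0
        apply hw'0
        rw [hvspan, mem_span_singleton] at hw'M
        obtain ⟨e, rfl⟩ := hw'M
        rw [lie_smul, h0, smul_zero]
      have hvc0 : ⁅(⁅u, x⁆ : M), c⁆ ≠ 0 := by
        intro h0
        apply hcv
        rw [← lie_skew, h0, neg_zero]
      have hvcM : ⁅(⁅u, x⁆ : M), c⁆ ∈ Mc (i + 2) := h.hM.lie_mem (i + 1) 1 _ hvM c hc1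
      have hspan2 := h.eq_span_of_ne_zero (i + 2) (by omega) hvcM hvc0
      intro w hw
      rw [show i + 1 + 1 = i + 2 from rfl, hspan2, mem_span_singleton] at hw
      obtain ⟨e, rfl⟩ := hw
      have : ⁅c, (⁅(⁅u, x⁆ : M), c⁆ : M)⁆ = 0 := by rw [← lie_skew, hz, neg_zero]
      rw [lie_smul, this, smul_zero]

/-! ### Basic facts over `F` -/

theorem fdFE (h : Stmt8Setup E M Mc F X Y) : FiniteDimensional F E :=
  .of_finrank_pos (by rw [h.hEF]; norm_num)

theorem fdRestrict (h : Stmt8Setup E M Mc F X Y) (i : ℕ) (hi : 1 ≤ i) :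
    FiniteDimensional F ↥((Mc i).restrictScalars F) := by
  haveI := h.fdMc i hi
  haveI := h.fdFE
  haveI : FiniteDimensional F ↥(Mc i) := FiniteDimensional.trans F E ↥(Mc i)
  exact Module.Finite.equiv ((Submodule.restrictScalarsEquiv F E M (Mc i)).restrictScalars F).symm

theorem finrank_restrict (h : Stmt8Setup E M Mc F X Y) (i : ℕ) (hi : 2 ≤ i) :
    Module.finrank F ↥((Mc i).restrictScalars F) = 2 := by
  haveI := h.fdMc i (by omega)
  rw [((Submodule.restrictScalarsEquiv F E M (Mc i)).restrictScalars F).finrank_eq]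
  have hm := Module.finrank_mul_finrank F E ↥(Mc i)
  rw [h.hEF, h.hM.finrank_eq_one i hi, mul_one] at hm
  omega

theorem L1_def : Lcomp F X Y 1 = span F {X, Y} := rfl

theorem X_mem_L1 : X ∈ Lcomp F X Y 1 := subset_span (Set.mem_insert _ _)

theorem Y_mem_L1 : Y ∈ Lcomp F X Y 1 :=
  subset_span (Set.mem_insert_of_mem _ rfl)

theorem Lsucc_def (i : ℕ) (hi : 1 ≤ i) :
    Lcomp F X Y (i + 1) =
      span F {z : M | ∃ v ∈ Lcomp F X Y i, ∃ a ∈ Lcomp F X Y 1, z = ⁅v, a⁆} := by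
  obtain ⟨k, rfl⟩ : ∃ k, i = k + 1 := ⟨i - 1, by omega⟩
  rfl

theorem L1_le (h : Stmt8Setup E M Mc F X Y) :
    Lcomp F X Y 1 ≤ (Mc 1).restrictScalars F := by
  rw [L1_def, span_le]
  rintro z hz
  rcases hz with rfl | hz
  · exact h.hX
  · rcases hz with rfl
    exact h.hY

theorem L_le_restrict (h : Stmt8Setup E M Mc F X Y) (i : ℕ) (hi : 1 ≤ i) :
    Lcomp F X Y i ≤ (Mc i).restrictScalars F := by
  induction i with
  | zero => omega
  | succ n ih =>
    rcases Nat.lt_or_ge n 1 with hn | hn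
    · interval_cases n
      exact h.L1_le
    · rw [Lsucc_def n hn, span_le]
      rintro z ⟨v, hv, a, ha, rfl⟩
      exact h.hM.lie_mem n 1 v (ih hn hv) a (h.L1_le ha)

theorem linearIndependent_F (h : Stmt8Setup E M Mc F X Y) :
    LinearIndependent F ![X, Y] := by
  refine h.hXY.restrict_scalars ?_
  intro a b hab
  simp only at hab
  rwa [← Algebra.algebraMap_eq_smul_one, ← Algebra.algebraMap_eq_smul_one,
    (algebraMap F E).injective.eq_iff] at hab

theorem finrank_L1 (h : Stmt8Setup E M Mc F X Y) :
    Module.finrank F ↥(Lcomp F X Y 1) = 2 := by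
  have hr : Set.range ![X, Y] = {X, Y} := by
    ext z
    simp only [Set.mem_insert_iff, Set.mem_singleton_iff, Set.mem_range, Fin.exists_fin_two]
    tauto
  have hs := finrank_span_eq_card h.linearIndependent_F
  rw [hr] at hs
  rw [L1_def, hs]
  simp

theorem fdL (h : Stmt8Setup E M Mc F X Y) (i : ℕ) :
    FiniteDimensional F ↥(Lcomp F X Y i) := by
  rcases Nat.eq_zero_or_pos i with rfl | hi
  · rw [show Lcomp F X Y 0 = ⊥ from rfl]
    infer_instance
  · haveI := h.fdRestrict i hi
    exact Submodule.finiteDimensional_of_le (h.L_le_restrict i hi)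

theorem span_bracket_eq_map (u : M) :
    span F {z : M | ∃ a ∈ Lcomp F X Y 1, z = ⁅u, a⁆}
      = Submodule.map (LieAlgebra.ad F M u) (Lcomp F X Y 1) := by
  have hset : {z : M | ∃ a ∈ Lcomp F X Y 1, z = ⁅u, a⁆}
      = (LieAlgebra.ad F M u) '' (Lcomp F X Y 1) := by
    ext z
    constructor
    · rintro ⟨a, ha, rfl⟩
      exact ⟨a, ha, rfl⟩
    · rintro ⟨a, ha, rfl⟩
      exact ⟨a, ha, rfl⟩
  rw [hset, ← Submodule.map_coe, Submodule.span_eq]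

theorem map_le_Lsucc (h : Stmt8Setup E M Mc F X Y) (i : ℕ) (hi : 1 ≤ i)
    {u : M} (hu : u ∈ Lcomp F X Y i) :
    Submodule.map (LieAlgebra.ad F M u) (Lcomp F X Y 1) ≤ Lcomp F X Y (i + 1) := by
  rw [Lsucc_def i hi]
  rintro z ⟨a, ha, rfl⟩
  exact subset_span ⟨u, hu, a, ha, rfl⟩

theorem Lsucc_of_span (h : Stmt8Setup E M Mc F X Y) (i : ℕ) (hi : 1 ≤ i)
    {u : M} (hL : Lcomp F X Y i = span F {u}) :
    Lcomp F X Y (i + 1) = Submodule.map (LieAlgebra.ad F M u) (Lcomp F X Y 1) := by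
  refine le_antisymm ?_ (h.map_le_Lsucc i hi (hL ▸ mem_span_singleton_self u))
  rw [Lsucc_def i hi, span_le]
  rintro z ⟨v, hv, a, ha, rfl⟩
  rw [hL, mem_span_singleton] at hv
  obtain ⟨d, rfl⟩ := hv
  rw [smul_lie]
  exact Submodule.smul_mem _ d ⟨a, ha, rfl⟩

theorem bracket_in_L1 (h : Stmt8Setup E M Mc F X Y) {u a : M}
    (hu : u ∈ Lcomp F X Y 1) (ha : a ∈ Lcomp F X Y 1) :
    ∃ d : F, ⁅u, a⁆ = d • ⁅X, Y⁆ := by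
  rw [L1_def, mem_span_pair] at hu ha
  obtain ⟨s, t, rfl⟩ := hu
  obtain ⟨p, q, rfl⟩ := ha
  exact ⟨s * q - t * p, pair_bracket X Y s t p q⟩

theorem L2_eq (h : Stmt8Setup E M Mc F X Y) : Lcomp F X Y 2 = span F {⁅X, Y⁆} := by
  refine le_antisymm ?_ ?_
  · rw [Lsucc_def 1 le_rfl, span_le]
    rintro z ⟨v, hv, a, ha, rfl⟩
    obtain ⟨d, hd⟩ := h.bracket_in_L1 hv ha
    rw [SetLike.mem_coe, mem_span_singleton]
    exact ⟨d, hd.symm⟩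
  · rw [span_le, Set.singleton_subset_iff, SetLike.mem_coe, Lsucc_def 1 le_rfl]
    exact subset_span ⟨X, X_mem_L1, Y, Y_mem_L1, rfl⟩

/-! ### The dimension count -/

theorem ker_inf_L1 (h : Stmt8Setup E M Mc F X Y) (i : ℕ) (hi : 2 ≤ i)
    {u : M} (hu : u ∈ Mc i) (hu0 : u ≠ 0) :
    LinearMap.ker (LieAlgebra.ad F M u) ⊓ Lcomp F X Y 1
      = (twoStepCentraliser Mc i).restrictScalars F ⊓ Lcomp F X Y 1 := by
  ext a
  simp only [Submodule.mem_inf, LinearMap.mem_ker, Submodule.restrictScalars_mem]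
  constructor
  · rintro ⟨hk, haL⟩
    rw [LieAlgebra.ad_apply] at hk
    refine ⟨h.centraliser_mem i hi hu hu0 (h.L1_le haL) ?_, haL⟩
    rw [← lie_skew, hk, neg_zero]
  · rintro ⟨⟨ha1, hc⟩, haL⟩
    refine ⟨?_, haL⟩
    rw [LieAlgebra.ad_apply, ← lie_skew, hc u hu, neg_zero]

theorem finrank_map_eq (h : Stmt8Setup E M Mc F X Y) (i : ℕ) (hi : 2 ≤ i)
    {u : M} (hu : u ∈ Mc i) (hu0 : u ≠ 0) :
    Module.finrank F ↥(Submodule.map (LieAlgebra.ad F M u) (Lcomp F X Y 1))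
      + dSeq E Mc F X Y i = 2 := by
  haveI := h.fdL 1
  have hrn := finrank_map_add_inf_ker (LieAlgebra.ad F M u) (Lcomp F X Y 1)
  rw [h.ker_inf_L1 i hi hu hu0, h.finrank_L1] at hrn
  exact hrn

theorem d_le_one (h : Stmt8Setup E M Mc F X Y) (i : ℕ) (hi : 2 ≤ i) :
    dSeq E Mc F X Y i ≤ 1 := by
  by_contra hd
  push_neg at hd
  haveI := h.fdL 1
  haveI : FiniteDimensional F
      ↥((twoStepCentraliser Mc i).restrictScalars F ⊓ Lcomp F X Y 1) :=
    Submodule.finiteDimensional_of_le inf_le_right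
  have heq : (twoStepCentraliser Mc i).restrictScalars F ⊓ Lcomp F X Y 1
      = Lcomp F X Y 1 := by
    refine Submodule.eq_of_le_of_finrank_le inf_le_right ?_
    rw [h.finrank_L1]
    exact hd
  have hXC : X ∈ twoStepCentraliser Mc i := by
    have : X ∈ (twoStepCentraliser Mc i).restrictScalars F ⊓ Lcomp F X Y 1 := by
      rw [heq]; exact X_mem_L1
    exact this.1
  have hYC : Y ∈ twoStepCentraliser Mc i := by
    have : Y ∈ (twoStepCentraliser Mc i).restrictScalars F ⊓ Lcomp F X Y 1 := by
      rw [heq]; exact Y_mem_L1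
    exact this.1
  exact h.not_centraliser_top i hi hXC hYC

theorem map_eq_full (h : Stmt8Setup E M Mc F X Y) (i : ℕ) (hi : 2 ≤ i)
    {u : M} (huL : u ∈ Lcomp F X Y i) (hu0 : u ≠ 0) (hd : dSeq E Mc F X Y i = 0) :
    Submodule.map (LieAlgebra.ad F M u) (Lcomp F X Y 1) = (Mc (i + 1)).restrictScalars F ∧
      Lcomp F X Y (i + 1) = (Mc (i + 1)).restrictScalars F := by
  have huM : u ∈ Mc i := h.L_le_restrict i (by omega) huL
  have h1 : Module.finrank F ↥(Submodule.map (LieAlgebra.ad F M u) (Lcomp F X Y 1)) = 2 := by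
    have := h.finrank_map_eq i hi huM hu0
    omega
  haveI := h.fdRestrict (i + 1) (by omega)
  have hle : Submodule.map (LieAlgebra.ad F M u) (Lcomp F X Y 1)
      ≤ (Mc (i + 1)).restrictScalars F := by
    rintro z ⟨a, ha, rfl⟩
    have : (⁅u, a⁆ : M) ∈ Mc (i + 1) := h.hM.lie_mem i 1 u huM a (h.L1_le ha)
    simpa [LieAlgebra.ad_apply] using this
  have hmap : Submodule.map (LieAlgebra.ad F M u) (Lcomp F X Y 1)
      = (Mc (i + 1)).restrictScalars F :=
    Submodule.eq_of_le_of_finrank_le hle (by rw [h.finrank_restrict (i + 1) (by omega), h1])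
  refine ⟨hmap, le_antisymm (h.L_le_restrict (i + 1) (by omega)) ?_⟩
  rw [← hmap]
  exact h.map_le_Lsucc i (by omega) huL

/-! ### Existence of an irrational scalar -/

theorem exists_not_in_range (h : Stmt8Setup E M Mc F X Y) :
    ∃ ε : E, ∀ r : F, algebraMap F E r ≠ ε := by
  by_contra hc
  push_neg at hc
  have hle : (⊤ : Submodule F E) ≤ span F ({1} : Set E) := by
    intro z _
    obtain ⟨r, hr⟩ := hc z
    rw [mem_span_singleton]
    exact ⟨r, by rw [← hr, Algebra.algebraMap_eq_smul_one]⟩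
  have htop : span F ({1} : Set E) = ⊤ := le_antisymm le_top hle
  have h1 := finrank_span_singleton (K := F) (one_ne_zero : (1 : E) ≠ 0)
  rw [htop, finrank_top, h.hEF] at h1
  exact absurd h1 (by norm_num)

/-! ### Failure of the covering property when `d_i = 1` on a full component -/

theorem d_eq_zero_of_two (h : Stmt8Setup E M Mc F X Y) (hcov : CoveringProperty F X Y)
    (i : ℕ) (hi : 2 ≤ i) (hfr : Module.finrank F ↥(Lcomp F X Y i) = 2) :
    dSeq E Mc F X Y i = 0 := by
  haveI := h.fdRestrict i (by omega)
  haveI := h.fdL 1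
  have hLfull : Lcomp F X Y i = (Mc i).restrictScalars F :=
    Submodule.eq_of_le_of_finrank_le (h.L_le_restrict i (by omega))
      (by rw [h.finrank_restrict i hi, hfr])
  by_contra hd0
  have hd1 : dSeq E Mc F X Y i = 1 := by
    have := h.d_le_one i hi
    omega
  -- a nonzero element of `M_i`
  obtain ⟨u0, hu0M, hu00⟩ := h.exists_ne_zero i hi
  have hu0L : u0 ∈ Lcomp F X Y i := by rw [hLfull]; exact hu0M
  -- an element `b ∈ L_1` with `⁅u0, b⁆ ≠ 0`
  have hmap1 : Module.finrank F
      ↥(Submodule.map (LieAlgebra.ad F M u0) (Lcomp F X Y 1)) = 1 := by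
    have := h.finrank_map_eq i hi hu0M hu00
    omega
  have hmapne : Submodule.map (LieAlgebra.ad F M u0) (Lcomp F X Y 1) ≠ ⊥ := by
    intro hb
    rw [hb, finrank_bot] at hmap1
    exact absurd hmap1 (by norm_num)
  obtain ⟨w, hwmem, hw0⟩ := (Submodule.ne_bot_iff _).1 hmapne
  obtain ⟨b, hbL, rfl⟩ := hwmem
  rw [LieAlgebra.ad_apply] at hw0
  -- the image of `ad u0` on `L_1` is the `F`-line spanned by `⁅u0, b⁆`
  have hwmap : (⁅u0, b⁆ : M) ∈ Submodule.map (LieAlgebra.ad F M u0) (Lcomp F X Y 1) :=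
    ⟨b, hbL, rfl⟩
  haveI : Module.Finite F ↥(Submodule.map (LieAlgebra.ad F M u0) (Lcomp F X Y 1)) :=
    Module.Finite.map (Lcomp F X Y 1) (LieAlgebra.ad F M u0)
  have hmapspan : Submodule.map (LieAlgebra.ad F M u0) (Lcomp F X Y 1)
      = span F {(⁅u0, b⁆ : M)} := by
    refine (Submodule.eq_of_le_of_finrank_le ?_ ?_).symm
    · rwa [span_singleton_le_iff_mem]
    · rw [finrank_span_singleton hw0, hmap1]
  -- an irrational scalar
  obtain ⟨ε, hε⟩ := h.exists_not_in_range
  have hε0 : ε ≠ 0 := fun h0 => hε 0 (by rw [map_zero, h0])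
  -- apply the covering property to `u0` and `ε • u0`
  have hεu0L : ε • u0 ∈ Lcomp F X Y i := by
    rw [hLfull]
    exact Submodule.smul_mem (Mc i) ε hu0M
  have hεu00 : ε • u0 ≠ 0 := smul_ne_zero hε0 hu00
  have hc1 := hcov i (by omega) u0 hu0L hu00
  have hc2 := hcov i (by omega) (ε • u0) hεu0L hεu00
  rw [span_bracket_eq_map] at hc1 hc2
  -- `ε • ⁅u0, b⁆` lies in the image of `ad u0` on `L_1`
  have hmem : ε • ⁅u0, b⁆ ∈ Submodule.map (LieAlgebra.ad F M u0) (Lcomp F X Y 1) := by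
    rw [hc1, ← hc2]
    exact ⟨b, hbL, by rw [LieAlgebra.ad_apply, smul_lie]⟩
  rw [hmapspan, mem_span_singleton] at hmem
  obtain ⟨r, hr⟩ := hmem
  have hzero : (algebraMap F E r - ε) • (⁅u0, b⁆ : M) = 0 := by
    rw [sub_smul, algebraMap_smul, hr, sub_self]
  rcases smul_eq_zero.1 hzero with h0 | h0
  · exact hε r (by rwa [sub_eq_zero] at h0)
  · exact hw0 h0

/-! ### The covering property in degree `1` -/

theorem cov1 (h : Stmt8Setup E M Mc F X Y) {u : M} (huL : u ∈ Lcomp F X Y 1) (hu0 : u ≠ 0) :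
    Submodule.map (LieAlgebra.ad F M u) (Lcomp F X Y 1) = Lcomp F X Y 2 := by
  rw [h.L2_eq]
  refine le_antisymm ?_ ?_
  · rintro z ⟨a, ha, rfl⟩
    obtain ⟨d, hd⟩ := h.bracket_in_L1 huL ha
    exact mem_span_singleton.2 ⟨d, by rw [LieAlgebra.ad_apply, hd]⟩
  · rw [span_le, Set.singleton_subset_iff, SetLike.mem_coe]
    rw [L1_def, mem_span_pair] at huL
    obtain ⟨s, t, rfl⟩ := huL
    by_cases hs : s = 0
    · have ht : t ≠ 0 := by
        rintro rfl
        apply hu0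
        rw [hs]
        simp
      refine ⟨(-t⁻¹) • X + (0 : F) • Y,
        add_mem (Submodule.smul_mem _ (-t⁻¹) X_mem_L1) (Submodule.smul_mem _ (0 : F) Y_mem_L1),
        ?_⟩
      rw [LieAlgebra.ad_apply, pair_bracket X Y s t (-t⁻¹) (0 : F), hs]
      have h1 : (0 : F) * 0 - t * -t⁻¹ = 1 := by field_simp; ring
      rw [h1, one_smul]
    · refine ⟨(0 : F) • X + s⁻¹ • Y,
        add_mem (Submodule.smul_mem _ (0 : F) X_mem_L1) (Submodule.smul_mem _ s⁻¹ Y_mem_L1),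
        ?_⟩
      rw [LieAlgebra.ad_apply, pair_bracket X Y s t (0 : F) s⁻¹]
      have h1 : s * s⁻¹ - t * 0 = 1 := by field_simp; ring
      rw [h1, one_smul]

/-! ### Nontriviality of all components -/

theorem L_ne_bot (h : Stmt8Setup E M Mc F X Y) (i : ℕ) (hi : 1 ≤ i) :
    Lcomp F X Y i ≠ ⊥ := by
  induction i with
  | zero => omega
  | succ n ih =>
    rcases Nat.lt_or_ge n 1 with hn | hn
    · interval_cases n
      intro hb
      have hXmem : X ∈ (⊥ : Submodule F M) := hb ▸ (X_mem_L1 (F := F) (X := X) (Y := Y))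
      rw [Submodule.mem_bot] at hXmem
      exact h.hXY.ne_zero 0 (by simpa using hXmem)
    · rcases Nat.eq_or_lt_of_le hn with h1 | h2
      · -- n = 1
        intro hb
        rw [show n + 1 = 2 by omega, h.L2_eq] at hb
        rw [span_eq_bot] at hb
        exact h.W_ne_zero (hb _ rfl)
      · -- 2 ≤ n
        have h2n : 2 ≤ n := h2
        obtain ⟨u, huL, hu0⟩ := (Submodule.ne_bot_iff _).1 (ih hn)
        have huM : u ∈ Mc n := h.L_le_restrict n hn huL
        have hd := h.d_le_one n h2n
        have hfr := h.finrank_map_eq n h2n huM hu0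
        have hmapne : Submodule.map (LieAlgebra.ad F M u) (Lcomp F X Y 1) ≠ ⊥ := by
          intro hb
          rw [hb, finrank_bot] at hfr
          omega
        obtain ⟨z, hz, hz0⟩ := (Submodule.ne_bot_iff _).1 hmapne
        intro hb
        apply hz0
        have : z ∈ Lcomp F X Y (n + 1) := h.map_le_Lsucc n hn huL hz
        rw [hb, Submodule.mem_bot] at this
        exact this

/-! ### Propagation of full components under the covering property -/

theorem prop_from (h : Stmt8Setup E M Mc F X Y) (hcov : CoveringProperty F X Y)
    (i0 : ℕ) (h0 : 2 ≤ i0) (hfr : Module.finrank F ↥(Lcomp F X Y i0) = 2) :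
    ∀ i, i0 ≤ i → Module.finrank F ↥(Lcomp F X Y i) = 2 ∧ dSeq E Mc F X Y i = 0 := by
  intro i hi
  induction i, hi using Nat.le_induction with
  | base => exact ⟨hfr, h.d_eq_zero_of_two hcov i0 h0 hfr⟩
  | succ i hi ih =>
    obtain ⟨hf, hd⟩ := ih
    have hne : Lcomp F X Y i ≠ ⊥ := by
      intro hb
      rw [hb, finrank_bot] at hf
      omega
    obtain ⟨u, huL, hu0⟩ := (Submodule.ne_bot_iff _).1 hne
    have h2i : 2 ≤ i := le_trans h0 hi
    obtain ⟨-, hL⟩ := h.map_eq_full i h2i huL hu0 hd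
    have hfr' : Module.finrank F ↥(Lcomp F X Y (i + 1)) = 2 := by
      rw [hL]
      exact h.finrank_restrict (i + 1) (by omega)
    exact ⟨hfr', h.d_eq_zero_of_two hcov (i + 1) (by omega) hfr'⟩

/-! ### The two directions -/

theorem forward (h : Stmt8Setup E M Mc F X Y) (hcov : CoveringProperty F X Y)
    (hnmax : ¬ ∀ i : ℕ, 2 ≤ i → Module.finrank F ↥(Lcomp F X Y i) = 1) :
    ∀ i : ℕ, 2 ≤ i → dSeq E Mc F X Y i = 0 := by
  push_neg at hnmax
  obtain ⟨m, hm2, hm1⟩ := hnmax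
  -- the `m`-th component is two-dimensional
  haveI := h.fdL m
  haveI := h.fdRestrict m (by omega)
  have hfm : Module.finrank F ↥(Lcomp F X Y m) = 2 := by
    have hle2 : Module.finrank F ↥(Lcomp F X Y m) ≤ 2 := by
      have := Submodule.finrank_mono (h.L_le_restrict m (by omega))
      rwa [h.finrank_restrict m hm2] at this
    have hpos : Module.finrank F ↥(Lcomp F X Y m) ≠ 0 := by
      intro h0
      exact h.L_ne_bot m (by omega) (Submodule.finrank_eq_zero.1 h0)
    omega
  have hprop := h.prop_from hcov m hm2 hfm
  -- `d_2 = 0`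
  have hd2 : dSeq E Mc F X Y 2 = 0 := by
    haveI := h.fdL 1
    haveI : FiniteDimensional F
        ↥((twoStepCentraliser Mc 2).restrictScalars F ⊓ Lcomp F X Y 1) :=
      Submodule.finiteDimensional_of_le inf_le_right
    have hbot : (twoStepCentraliser Mc 2).restrictScalars F ⊓ Lcomp F X Y 1 = ⊥ := by
      by_contra hb
      obtain ⟨c, hcmem, hc0⟩ := (Submodule.ne_bot_iff _).1 hb
      have hcC : c ∈ twoStepCentraliser Mc 2 := hcmem.1
      have hcL : c ∈ Lcomp F X Y 1 := hcmem.2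
      have hdev := h.deviation c hcC.1 hcC.2 m hm2
      have hfin : ∃ j, (m ≤ j) ∧ c ∈ twoStepCentraliser Mc j := by
        rcases hdev with hj | hj
        · exact ⟨m, le_rfl, hcC.1, hj⟩
        · exact ⟨m + 1, by omega, hcC.1, hj⟩
      obtain ⟨j, hjm, hjC⟩ := hfin
      have hdj : dSeq E Mc F X Y j = 0 := (hprop j hjm).2
      haveI : FiniteDimensional F
          ↥((twoStepCentraliser Mc j).restrictScalars F ⊓ Lcomp F X Y 1) :=
        Submodule.finiteDimensional_of_le inf_le_right
      have hbj : (twoStepCentraliser Mc j).restrictScalars F ⊓ Lcomp F X Y 1 = ⊥ :=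
        Submodule.finrank_eq_zero.1 hdj
      have : c ∈ ((twoStepCentraliser Mc j).restrictScalars F ⊓ Lcomp F X Y 1 :
          Submodule F M) := ⟨hjC, hcL⟩
      rw [hbj, Submodule.mem_bot] at this
      exact hc0 this
    rw [dSeq, hbot, finrank_bot]
  intro i hi
  rcases eq_or_lt_of_le hi with h2 | h3
  · rw [← h2]
    exact hd2
  · have hW : (⁅X, Y⁆ : M) ∈ Lcomp F X Y 2 := by
      rw [h.L2_eq]
      exact mem_span_singleton_self _
    obtain ⟨-, hL3⟩ := h.map_eq_full 2 le_rfl hW h.W_ne_zero hd2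
    have hf3 : Module.finrank F ↥(Lcomp F X Y 3) = 2 := by
      rw [show (3 : ℕ) = 2 + 1 from rfl, hL3]
      exact h.finrank_restrict 3 (by omega)
    exact (h.prop_from hcov 3 (by omega) hf3 i (by omega)).2

theorem backward (h : Stmt8Setup E M Mc F X Y)
    (hd : ∀ i : ℕ, 2 ≤ i → dSeq E Mc F X Y i = 0) :
    CoveringProperty F X Y ∧
      (∀ i : ℕ, 1 ≤ i → i ≠ 2 → Module.finrank F ↥(Lcomp F X Y i) = 2) ∧
      Module.finrank F ↥(Lcomp F X Y 2) = 1 ∧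
      ¬ (∀ i : ℕ, 2 ≤ i → Module.finrank F ↥(Lcomp F X Y i) = 1) := by
  have hW : (⁅X, Y⁆ : M) ∈ Lcomp F X Y 2 := by
    rw [h.L2_eq]
    exact mem_span_singleton_self _
  have hfull : ∀ i, 3 ≤ i → Lcomp F X Y i = (Mc i).restrictScalars F := by
    intro i hi
    induction i, hi using Nat.le_induction with
    | base => exact (h.map_eq_full 2 le_rfl hW h.W_ne_zero (hd 2 le_rfl)).2
    | succ i hi ih =>
      obtain ⟨u, huM, hu0⟩ := h.exists_ne_zero i (by omega)
      have huL : u ∈ Lcomp F X Y i := by rw [ih]; exact huM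
      exact (h.map_eq_full i (by omega) huL hu0 (hd i (by omega))).2
  have hfr3 : ∀ i, 3 ≤ i → Module.finrank F ↥(Lcomp F X Y i) = 2 := by
    intro i hi
    rw [hfull i hi]
    exact h.finrank_restrict i (by omega)
  have hfr2 : Module.finrank F ↥(Lcomp F X Y 2) = 1 := by
    rw [h.L2_eq]
    exact finrank_span_singleton h.W_ne_zero
  refine ⟨?_, fun i hi hne2 => ?_, hfr2, ?_⟩
  · -- the covering property
    intro i hi u huL hu0
    rw [span_bracket_eq_map]
    rcases Nat.eq_or_lt_of_le hi with h1 | h2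
    · rw [show i = 1 by omega] at huL ⊢
      exact h.cov1 huL hu0
    · have h2i : 2 ≤ i := h2
      obtain ⟨hmap, hL⟩ := h.map_eq_full i h2i huL hu0 (hd i h2i)
      rw [hmap, hL]
  · -- dimensions away from `2`
    rcases Nat.lt_or_ge i 3 with h3 | h3
    · interval_cases i
      · exact h.finrank_L1
      · omega
    · exact hfr3 i h3
  · -- not of maximal class
    intro hmax
    have := hmax 3 (by omega)
    rw [hfr3 3 le_rfl] at this
    omega

end Stmt8Setup

end Aux

/-- if `[E : F] = 2`, then `L` is thin (covering property, and not of maximal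
class over `F`) if and only if `d_i = 0` for every `i ≥ 2`; in that case `dim_F L_i = 2`
for every `i ≥ 1` with `i ≠ 2`, and `dim_F L_2 = 1`. -/
theorem stmt_8 (E : Type*) [Field E] (M : Type*) [LieRing M] [LieAlgebra E M]
    (Mc : ℕ → Submodule E M) (hM : IsMaximalClass E M Mc)
    (F : Type*) [Field F] [Algebra F E] [LieAlgebra F M] [IsScalarTower F E M]
    (hEF : Module.finrank F E = 2)
    (X Y : M) (hX : X ∈ Mc 1) (hY : Y ∈ Mc 1) (hXY : LinearIndependent E ![X, Y]) :
    ((CoveringProperty F X Y ∧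
        ¬ (∀ i : ℕ, 2 ≤ i → Module.finrank F ↥(Lcomp F X Y i) = 1)) ↔
      (∀ i : ℕ, 2 ≤ i → dSeq E Mc F X Y i = 0)) ∧
    ((∀ i : ℕ, 2 ≤ i → dSeq E Mc F X Y i = 0) →
      (∀ i : ℕ, 1 ≤ i → i ≠ 2 → Module.finrank F ↥(Lcomp F X Y i) = 2) ∧
      Module.finrank F ↥(Lcomp F X Y 2) = 1) := by
  have h : Stmt8Setup E M Mc F X Y := ⟨hM, hEF, hX, hY, hXY⟩
  constructor
  · constructor
    · rintro ⟨hcov, hnmax⟩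
      exact h.forward hcov hnmax
    · intro hd
      obtain ⟨hcov, -, -, hnmax⟩ := h.backward hd
      exact ⟨hcov, hnmax⟩
  · intro hd
    obtain ⟨-, hdims, hfr2, -⟩ := h.backward hd
    exact ⟨hdims, hfr2⟩
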